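/- Let Φ : [0,∞)ⁿ → [0,∞) be such that Ψ(x) := Φ(|x₁|,…,|xₙ|) is a norm on ℝⁿ induced by an inner product. Let (Vᵢ, ⟨·,·⟩ᵢ) be real inner product spaces, i = 1,…,n, and define the norm ‖(v₁,…,vₙ)‖_Φ := Φ(‖v₁‖₁,…,‖vₙ‖ₙ) on V = V₁ × ⋯ × Vₙ. Then ‖·‖_Φ is induced by the inner product ⟨v,w⟩_Φ = ∑ᵢ Φ²(eᵢ)·⟨vᵢ,wᵢ⟩ᵢ. -/

import Mathlib

open scoped RealInnerProductSpace

/-- if `Ψ(x) = Φ(|x₁|,…,|xₙ|)` is a norm on `ℝⁿ` induced by an inner product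
(equivalently, satisfies the parallelogram law), then on a product `V = V₁ × ⋯ × Vₙ` of real
inner product spaces the norm `‖v‖_Φ = Φ(‖v₁‖,…,‖vₙ‖)` is induced by the inner product
`⟨v,w⟩_Φ = ∑ Φ²(eᵢ) ⟨vᵢ,wᵢ⟩ᵢ`. -/
theorem stmt16 (n : ℕ) (Φ : (Fin n → ℝ) → ℝ)
    (hnn : ∀ q : Fin n → ℝ, (∀ i, 0 ≤ q i) → 0 ≤ Φ q)
    (hdef : ∀ q : Fin n → ℝ, (∀ i, 0 ≤ q i) → (Φ q = 0 ↔ q = 0))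
    (hmono : ∀ p q : Fin n → ℝ, (∀ i, 0 ≤ q i) → (∀ i, q i ≤ p i) → Φ q ≤ Φ p)
    (hsub : ∀ p q : Fin n → ℝ, (∀ i, 0 ≤ p i) → (∀ i, 0 ≤ q i) → Φ (p + q) ≤ Φ p + Φ q)
    (hhom : ∀ (l : ℝ) (q : Fin n → ℝ), 0 ≤ l → (∀ i, 0 ≤ q i) → Φ (l • q) = l * Φ q)
    (hpar : ∀ x y : Fin n → ℝ,
        Φ (fun i => |(x + y) i|) ^ 2 + Φ (fun i => |(x - y) i|) ^ 2 =
          2 * Φ (fun i => |x i|) ^ 2 + 2 * Φ (fun i => |y i|) ^ 2)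
    (V : Fin n → Type*) (instG : ∀ i, NormedAddCommGroup (V i))
    (instI : ∀ i, InnerProductSpace ℝ (V i)) :
    (∀ v : ∀ i, V i,
      Φ (fun i => ‖v i‖) ^ 2 = ∑ i, Φ (Pi.single i (1:ℝ)) ^ 2 * ⟪v i, v i⟫) ∧
    (∀ v w : ∀ i, V i,
      (Φ (fun i => ‖v i + w i‖) ^ 2 - Φ (fun i => ‖v i - w i‖) ^ 2) / 4 =
        ∑ i, Φ (Pi.single i (1:ℝ)) ^ 2 * ⟪v i, w i⟫) := by
  classical
  set Q : (Fin n → ℝ) → ℝ := fun x => Φ (fun i => |x i|) ^ 2 with hQdef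
  set B : (Fin n → ℝ) → (Fin n → ℝ) → ℝ := fun x y => (Q (x + y) - Q (x - y)) / 4 with hBdef
  have hQpar : ∀ x y, Q (x + y) + Q (x - y) = 2 * Q x + 2 * Q y := fun x y => hpar x y
  have hQeven : ∀ x, Q (-x) = Q x := by
    intro x
    simp only [hQdef, Pi.neg_apply, abs_neg]
  have hQzero : Q 0 = 0 := by
    have h0 : Φ (0 : Fin n → ℝ) = 0 := (hdef 0 (fun i => le_refl 0)).2 rfl
    have h1 : (fun i => |(0 : Fin n → ℝ) i|) = (0 : Fin n → ℝ) := by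
      funext i; simp
    simp only [hQdef, h1, h0]
    norm_num
  have hB0 : ∀ z, B 0 z = 0 := by
    intro z
    simp only [hBdef, zero_add, zero_sub, hQeven, sub_self, zero_div]
  have key : ∀ x y z, B x z + B y z = B (x + y) (z + z) / 2 := by
    intro x y z
    have h1 := hQpar (x + z) (y + z)
    have h2 := hQpar (x - z) (y - z)
    have e1 : (x + z) + (y + z) = (x + y) + (z + z) := by abel
    have e2 : (x + z) - (y + z) = x - y := by abel
    have e3 : (x - z) + (y - z) = (x + y) - (z + z) := by abel
    have e4 : (x - z) - (y - z) = x - y := by abel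
    rw [e1, e2] at h1
    rw [e3, e4] at h2
    simp only [hBdef]
    linarith
  have hdouble : ∀ x z, B x z = B x (z + z) / 2 := by
    intro x z
    have h := key x 0 z
    rwa [hB0 z, add_zero, add_zero] at h
  have hadd : ∀ x y z, B (x + y) z = B x z + B y z := by
    intro x y z
    rw [key x y z, ← hdouble (x + y) z]
  have hsymm : ∀ x y, B x y = B y x := by
    intro x y
    simp only [hBdef]
    rw [add_comm x y, show x - y = -(y - x) by abel, hQeven]
  have hsingle_nn : ∀ i : Fin n, ∀ k : Fin n, (0:ℝ) ≤ (Pi.single i (1:ℝ) : Fin n → ℝ) k := by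
    intro i k
    rcases eq_or_ne k i with h | h <;> simp [Pi.single_apply, h]
  have hQsingle : ∀ (i : Fin n) (t : ℝ),
      Q (Pi.single i t) = t ^ 2 * Φ (Pi.single i (1:ℝ)) ^ 2 := by
    intro i t
    have h : (fun k => |(Pi.single i t : Fin n → ℝ) k|) = |t| • (Pi.single i (1:ℝ) : Fin n → ℝ) := by
      funext k
      rcases eq_or_ne k i with h | h <;> simp [Pi.single_apply, h]
    simp only [hQdef, h, hhom |t| _ (abs_nonneg t) (hsingle_nn i)]
    rw [mul_pow, sq_abs]
  have hBdiag : ∀ (i : Fin n) (a : ℝ),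
      B (Pi.single i a) (Pi.single i a) = a ^ 2 * Φ (Pi.single i (1:ℝ)) ^ 2 := by
    intro i a
    have h1 : (Pi.single i a : Fin n → ℝ) + Pi.single i a = Pi.single i (a + a) := by
      rw [← Pi.single_add]
    simp only [hBdef, h1, sub_self, hQzero, hQsingle]
    ring
  have hBcross : ∀ (i j : Fin n), i ≠ j → ∀ a b : ℝ,
      B (Pi.single i a) (Pi.single j b) = 0 := by
    intro i j hij a b
    have h : (fun k => |((Pi.single i a + Pi.single j b : Fin n → ℝ)) k|) =
        (fun k => |((Pi.single i a - Pi.single j b : Fin n → ℝ)) k|) := by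
      funext k
      by_cases hki : k = i
      · subst hki
        simp [Pi.single_apply, Ne.symm hij]
      · by_cases hkj : k = j
        · subst hkj
          simp [Pi.single_apply, hki, abs_neg]
        · simp [Pi.single_apply, hki, hkj]
    simp only [hBdef, hQdef, h, sub_self, zero_div]
  have hsuml : ∀ (g : Fin n → (Fin n → ℝ)) (z : Fin n → ℝ),
      B (∑ i, g i) z = ∑ i, B (g i) z := by
    intro g z
    have h : ∀ s : Finset (Fin n), B (∑ i ∈ s, g i) z = ∑ i ∈ s, B (g i) z := by
      intro s
      induction s using Finset.induction_on with
      | empty => simpa using hB0 z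
      | insert _ _ h ih =>
          rw [Finset.sum_insert h, Finset.sum_insert h, hadd, ih]
    exact h Finset.univ
  have hQquad : ∀ x : Fin n → ℝ, Q x = B x x := by
    intro x
    have h2 : Q (x + x) = 4 * Q x := by
      have h : (fun i => |(x + x) i|) = (2:ℝ) • (fun i => |x i|) := by
        funext i
        simp only [Pi.add_apply, Pi.smul_apply, smul_eq_mul]
        rw [show x i + x i = 2 * x i by ring, abs_mul]
        norm_num
      simp only [hQdef, h, hhom 2 _ (by norm_num) (fun i => abs_nonneg _)]
      ring
    simp only [hBdef, sub_self, hQzero, h2]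
    ring
  have hmain : ∀ x : Fin n → ℝ,
      Q x = ∑ i, Φ (Pi.single i (1:ℝ)) ^ 2 * x i ^ 2 := by
    intro x
    have hx : ∑ i, Pi.single i (x i) = x := Finset.univ_sum_single x
    calc Q x = B x x := hQquad x
      _ = ∑ i, ∑ j, B (Pi.single i (x i)) (Pi.single j (x j)) := by
          conv_lhs => rw [← hx]
          rw [hsuml]
          refine Finset.sum_congr rfl fun i _ => ?_
          rw [hsymm, hsuml]
          exact Finset.sum_congr rfl fun j _ => hsymm _ _
      _ = ∑ i, B (Pi.single i (x i)) (Pi.single i (x i)) := by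
          refine Finset.sum_congr rfl fun i _ => ?_
          exact Finset.sum_eq_single i
            (fun j _ hj => hBcross i j (Ne.symm hj) (x i) (x j))
            (fun h => absurd (Finset.mem_univ i) h)
      _ = ∑ i, Φ (Pi.single i (1:ℝ)) ^ 2 * x i ^ 2 := by
          refine Finset.sum_congr rfl fun i _ => ?_
          rw [hBdiag]
          ring
  have habs : ∀ (f : Fin n → ℝ), (∀ i, 0 ≤ f i) → (fun i => |f i|) = f := by
    intro f hf
    funext i
    exact abs_of_nonneg (hf i)
  constructor
  · intro v
    have h := hmain (fun i => ‖v i‖)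
    simp only [hQdef] at h
    rw [habs _ (fun i => norm_nonneg _)] at h
    rw [h]
    refine Finset.sum_congr rfl fun i _ => ?_
    rw [real_inner_self_eq_norm_sq]
  · intro v w
    have h1 := hmain (fun i => ‖v i + w i‖)
    have h2 := hmain (fun i => ‖v i - w i‖)
    simp only [hQdef] at h1 h2
    rw [habs _ (fun i => norm_nonneg _)] at h1
    rw [habs _ (fun i => norm_nonneg _)] at h2
    rw [h1, h2, ← Finset.sum_sub_distrib, Finset.sum_div]
    refine Finset.sum_congr rfl fun i _ => ?_
    rw [norm_add_sq_real (v i) (w i), norm_sub_sq_real (v i) (w i)]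
    ring
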